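/- Let (X, P_X) and (Y, P_Y) be finite metric measure spaces equipped with m-pointed partitions, with μ_X and μ_Y fully supported. Suppose there exists a bijection φ: X → Y that is an isometry, is measure-preserving (μ_Y(φ(x)) = μ_X(x) for all x), and is compatible with the partitions, meaning there is a permutation σ of {1,…,m} such that φ(Uᵖ) = V^{σ(p)} and φ(xᵖ) = y^{σ(p)} for each p. Then d_qGW((X,P_X),(Y,P_Y)) = 0. -/
import Mathlib


open Finset

noncomputable section

/-- A probability vector on a finite type. -/
def IsProb {X : Type*} [Fintype X] (μ : X → ℝ) : Prop :=
  (∀ x, 0 ≤ μ x) ∧ (∑ x, μ x) = 1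

/-- `μ` is a coupling of the probability vectors `μX` and `μY`. -/
def IsCoupling {X Y : Type*} [Fintype X] [Fintype Y]
    (μX : X → ℝ) (μY : Y → ℝ) (μ : X → Y → ℝ) : Prop :=
  (∀ x y, 0 ≤ μ x y) ∧ (∀ x, (∑ y, μ x y) = μX x) ∧ (∀ y, (∑ x, μ x y) = μY y)

/-- The Gromov–Wasserstein loss of a coupling, for given distance functions. -/
def GWLoss {X Y : Type*} [Fintype X] [Fintype Y]
    (dX : X → X → ℝ) (dY : Y → Y → ℝ) (μ : X → Y → ℝ) : ℝ :=
  ∑ x, ∑ y, ∑ x', ∑ y', (dX x x' - dY y y') ^ 2 * μ x y * μ x' y'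

/-- The Gromov–Wasserstein distance between two finite mm-spaces. -/
def dGW {X Y : Type*} [Fintype X] [Fintype Y]
    (dX : X → X → ℝ) (dY : Y → Y → ℝ) (μX : X → ℝ) (μY : Y → ℝ) : ℝ :=
  sInf {r : ℝ | ∃ μ, IsCoupling μX μY μ ∧ r = Real.sqrt (GWLoss dX dY μ)}

/-- An `m`-pointed partition of `X`: each point is assigned to one of `m` blocks
(`part`), and each block `p` has a distinguished representative `rep p` lying in it.
Blocks are the fibers of `part`; they are disjoint, cover `X`, and are nonempty. -/
structure PointedPartition (X : Type*) (m : ℕ) where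
  part : X → Fin m
  rep : Fin m → X
  part_rep : ∀ p, part (rep p) = p

/-- The mass `μ_X(Uᵖ)` of the block `Uᵖ`; as a function of `p` this is the measure
`μ_{P_X}` of the quantized representation `Xᵐ` (identified with `Fin m`). -/
def blockMass {X : Type*} [Fintype X] (μX : X → ℝ) {m : ℕ}
    (P : PointedPartition X m) (p : Fin m) : ℝ :=
  ∑ x, if P.part x = p then μX x else 0

/-- The normalized measure `μ_{Uᵖ} = μ_X|_{Uᵖ} / μ_X(Uᵖ)` of a block, extended by zero
to all of `X` (this is `μ̄_{Uᵖ}`). -/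
def blockMeasure {X : Type*} [Fintype X] (μX : X → ℝ) {m : ℕ}
    (P : PointedPartition X m) (p : Fin m) (x : X) : ℝ :=
  if P.part x = p then μX x / blockMass μX P p else 0

/-- `μ` is a quantization coupling: `μ(x,y) = Σ_{p,q} μm(xᵖ,y^q) μ̄_{xᵖ,y^q}(x,y)` where
`μm` couples the quantized measures and each `ν p q` is (the extension by zero of) a
coupling of the block measures with `ν p q (xᵖ, y^q) > 0`. -/
def IsQuantCoupling {X Y : Type*} [Fintype X] [Fintype Y] {m : ℕ}
    (μX : X → ℝ) (μY : Y → ℝ)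
    (PX : PointedPartition X m) (PY : PointedPartition Y m)
    (μ : X → Y → ℝ) : Prop :=
  ∃ (μm : Fin m → Fin m → ℝ) (ν : Fin m → Fin m → X → Y → ℝ),
    IsCoupling (blockMass μX PX) (blockMass μY PY) μm ∧
    (∀ p q, IsCoupling (blockMeasure μX PX p) (blockMeasure μY PY q) (ν p q)) ∧
    (∀ p q, 0 < ν p q (PX.rep p) (PY.rep q)) ∧
    (∀ x y, μ x y = ∑ p, ∑ q, μm p q * ν p q x y)

/-- The quantized Gromov–Wasserstein distance between `m`-pointed mm-spaces. -/
def dqGW {X Y : Type*} [Fintype X] [Fintype Y] {m : ℕ}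
    (dX : X → X → ℝ) (dY : Y → Y → ℝ) (μX : X → ℝ) (μY : Y → ℝ)
    (PX : PointedPartition X m) (PY : PointedPartition Y m) : ℝ :=
  sInf {r : ℝ | ∃ μ, IsQuantCoupling μX μY PX PY μ ∧ r = Real.sqrt (GWLoss dX dY μ)}

/-- The quantized eccentricity `q(P_X) = (Σ_p μ_X(Uᵖ) s_{Uᵖ}(xᵖ)²)^{1/2}`, where
`s_{Uᵖ}(xᵖ)² = Σ_{x ∈ Uᵖ} d_X(xᵖ,x)² μ_{Uᵖ}(x)`. -/
def qEcc {X : Type*} [Fintype X] (dX : X → X → ℝ) (μX : X → ℝ) {m : ℕ}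
    (P : PointedPartition X m) : ℝ :=
  Real.sqrt (∑ p, blockMass μX P p * ∑ x, dX (P.rep p) x ^ 2 * blockMeasure μX P p x)

/-- The `m`-quantized eccentricity `q_m(X)`: minimum of `q(P_X)` over `m`-pointed
partitions. -/
def qEccMin (X : Type*) [Fintype X] (dX : X → X → ℝ) (μX : X → ℝ) (m : ℕ) : ℝ :=
  sInf {r : ℝ | ∃ P : PointedPartition X m, r = qEcc dX μX P}

end


section Aux

open Finset

lemma blockMass_pos {X : Type*} [Fintype X] (μX : X → ℝ) (hpos : ∀ x, 0 < μX x)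
    {m : ℕ} (P : PointedPartition X m) (p : Fin m) : 0 < blockMass μX P p := by
  unfold blockMass
  have h1 : ∀ x ∈ Finset.univ (α := X), 0 ≤ if P.part x = p then μX x else 0 := by
    intro x _; split
    · exact (hpos x).le
    · rfl
  calc (0:ℝ) < μX (P.rep p) := hpos _
    _ = (if P.part (P.rep p) = p then μX (P.rep p) else 0) := by simp [P.part_rep]
    _ ≤ _ := Finset.single_le_sum h1 (mem_univ _)

lemma blockMeasure_nonneg {X : Type*} [Fintype X] (μX : X → ℝ) (hpos : ∀ x, 0 < μX x)
    {m : ℕ} (P : PointedPartition X m) (p : Fin m) (x : X) :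
    0 ≤ blockMeasure μX P p x := by
  unfold blockMeasure
  split
  · exact div_nonneg (hpos x).le (blockMass_pos μX hpos P p).le
  · rfl

lemma blockMeasure_rep_pos {X : Type*} [Fintype X] (μX : X → ℝ) (hpos : ∀ x, 0 < μX x)
    {m : ℕ} (P : PointedPartition X m) (p : Fin m) :
    0 < blockMeasure μX P p (P.rep p) := by
  unfold blockMeasure
  rw [if_pos (P.part_rep p)]
  exact div_pos (hpos _) (blockMass_pos μX hpos P p)

lemma sum_blockMeasure {X : Type*} [Fintype X] (μX : X → ℝ) (hpos : ∀ x, 0 < μX x)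
    {m : ℕ} (P : PointedPartition X m) (p : Fin m) :
    ∑ x, blockMeasure μX P p x = 1 := by
  have hM := blockMass_pos μX hpos P p
  unfold blockMeasure
  have h : ∀ x : X, (if P.part x = p then μX x / blockMass μX P p else 0)
      = (if P.part x = p then μX x else 0) / blockMass μX P p := by
    intro x; split <;> simp
  simp_rw [h, ← Finset.sum_div]
  rw [show (∑ x, if P.part x = p then μX x else 0) = blockMass μX P p from rfl]
  exact div_self hM.ne'

lemma sum_blockMass_mul_blockMeasure {X : Type*} [Fintype X] (μX : X → ℝ)
    (hpos : ∀ x, 0 < μX x) {m : ℕ} (P : PointedPartition X m) (x : X) :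
    ∑ p, blockMass μX P p * blockMeasure μX P p x = μX x := by
  rw [Finset.sum_eq_single (P.part x)]
  · unfold blockMeasure
    rw [if_pos rfl, mul_div_cancel₀ _ (blockMass_pos μX hpos P (P.part x)).ne']
  · intro q _ hq
    unfold blockMeasure
    rw [if_neg (fun h => hq h.symm), mul_zero]
  · intro h; exact absurd (mem_univ _) h

end Aux

/-- a partition-compatible measure-preserving isometric bijection forces
the quantized GW distance to vanish. -/
theorem dqGW_eq_zero_of_pointed_isomorphism
    {X Y : Type*} [Fintype X] [Fintype Y] [MetricSpace X] [MetricSpace Y] {m : ℕ}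
    (μX : X → ℝ) (μY : Y → ℝ) (hμX : IsProb μX) (hμY : IsProb μY)
    (hXpos : ∀ x, 0 < μX x) (hYpos : ∀ y, 0 < μY y)
    (PX : PointedPartition X m) (PY : PointedPartition Y m)
    (φ : X ≃ Y) (σ : Equiv.Perm (Fin m))
    (hiso : ∀ x x', dist (φ x) (φ x') = dist x x')
    (hmeas : ∀ x, μY (φ x) = μX x)
    (hblocks : ∀ x, PY.part (φ x) = σ (PX.part x))
    (hreps : ∀ p, φ (PX.rep p) = PY.rep (σ p)) :
    dqGW (fun x x' => dist x x') (fun y y' => dist y y') μX μY PX PY = 0 := by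
  classical
  -- transferred block data
  have hMtrans : ∀ p, blockMass μY PY (σ p) = blockMass μX PX p := by
    intro p
    unfold blockMass
    rw [← Equiv.sum_comp φ (fun y => if PY.part y = σ p then μY y else 0)]
    apply Finset.sum_congr rfl
    intro x _
    rw [hblocks, hmeas]
    simp [σ.injective.eq_iff]
  have hmtrans : ∀ p x, blockMeasure μY PY (σ p) (φ x) = blockMeasure μX PX p x := by
    intro p x
    unfold blockMeasure
    rw [hMtrans, hblocks, hmeas]
    simp [σ.injective.eq_iff]
  set μ : X → Y → ℝ := fun x y => if φ x = y then μX x else 0 with hμ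
  set μm : Fin m → Fin m → ℝ := fun p q => if σ p = q then blockMass μX PX p else 0 with hμm
  set ν : Fin m → Fin m → X → Y → ℝ := fun p q x y =>
    if σ p = q then (if φ x = y then blockMeasure μX PX p x else 0)
    else blockMeasure μX PX p x * blockMeasure μY PY q y with hν
  have hνnn : ∀ p q x y, 0 ≤ ν p q x y := by
    intro p q x y
    simp only [hν]
    split
    · split
      · exact blockMeasure_nonneg μX hXpos PX p x
      · rfl
    · exact mul_nonneg (blockMeasure_nonneg μX hXpos PX p x)
        (blockMeasure_nonneg μY hYpos PY q y)
  have hquant : IsQuantCoupling μX μY PX PY μ := by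
    refine ⟨μm, ν, ⟨?_, ?_, ?_⟩, ?_, ?_, ?_⟩
    · intro p q
      simp only [hμm]
      split
      · exact (blockMass_pos μX hXpos PX p).le
      · rfl
    · intro p
      simp [hμm]
    · intro q
      simp only [hμm]
      rw [← Equiv.sum_comp σ.symm (fun p => if σ p = q then blockMass μX PX p else 0)]
      simp only [Equiv.apply_symm_apply]
      rw [Finset.sum_ite_eq' Finset.univ q (fun p => blockMass μX PX (σ.symm p))]
      rw [if_pos (mem_univ _)]
      have := hMtrans (σ.symm q)
      rw [Equiv.apply_symm_apply] at this
      exact this.symm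
    · intro p q
      refine ⟨fun x y => hνnn p q x y, ?_, ?_⟩
      · intro x
        simp only [hν]
        split
        · simp
        · rw [← Finset.mul_sum, sum_blockMeasure μY hYpos PY q, mul_one]
      · intro y
        by_cases h : σ p = q
        · simp only [hν, if_pos h]
          subst h
          have heq : ∀ x : X, (if φ x = y then blockMeasure μX PX p x else 0)
              = if x = φ.symm y then blockMeasure μX PX p x else 0 := by
            intro x
            congr 1
            simp only [eq_iff_iff, ← Equiv.eq_symm_apply]
          simp_rw [heq]
          rw [Finset.sum_ite_eq' Finset.univ (φ.symm y) (fun x => blockMeasure μX PX p x),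
            if_pos (mem_univ _)]
          rw [← hmtrans p (φ.symm y), Equiv.apply_symm_apply]
        · simp only [hν, if_neg h]
          rw [← Finset.sum_mul, sum_blockMeasure μX hXpos PX p, one_mul]
    · intro p q
      by_cases h : σ p = q
      · simp only [hν, if_pos h]
        rw [if_pos (by rw [hreps p, h])]
        exact blockMeasure_rep_pos μX hXpos PX p
      · simp only [hν, if_neg h]
        exact mul_pos (blockMeasure_rep_pos μX hXpos PX p)
          (blockMeasure_rep_pos μY hYpos PY q)
    · intro x y
      have hrow : ∀ p, ∑ q, μm p q * ν p q x y
          = blockMass μX PX p * (if φ x = y then blockMeasure μX PX p x else 0) := by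
        intro p
        rw [Finset.sum_eq_single (σ p)]
        · simp [hμm, hν]
        · intro q _ hq
          simp only [hμm]
          rw [if_neg (fun h => hq h.symm), zero_mul]
        · intro h; exact absurd (mem_univ _) h
      simp_rw [hrow]
      by_cases h : φ x = y
      · simp only [hμ, h, if_true]
        exact (sum_blockMass_mul_blockMeasure μX hXpos PX x).symm
      · simp [hμ, h]
  have hGW : GWLoss (fun x x' => dist x x') (fun y y' => dist y y') μ = 0 := by
    unfold GWLoss
    apply Finset.sum_eq_zero; intro x _
    apply Finset.sum_eq_zero; intro y _
    apply Finset.sum_eq_zero; intro x' _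
    apply Finset.sum_eq_zero; intro y' _
    by_cases h1 : φ x = y
    · by_cases h2 : φ x' = y'
      · subst h1; subst h2
        simp [hiso x x']
      · simp [hμ, h2]
    · simp [hμ, h1]
  have hmem : (0:ℝ) ∈ {r : ℝ | ∃ μ', IsQuantCoupling μX μY PX PY μ' ∧
      r = Real.sqrt (GWLoss (fun x x' => dist x x') (fun y y' => dist y y') μ')} :=
    ⟨μ, hquant, by rw [hGW, Real.sqrt_zero]⟩
  unfold dqGW
  apply le_antisymm
  · exact csInf_le ⟨0, fun r ⟨μ', _, hr⟩ => hr ▸ Real.sqrt_nonneg _⟩ hmem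
  · exact le_csInf ⟨0, hmem⟩ (fun r ⟨μ', _, hr⟩ => hr ▸ Real.sqrt_nonneg _)
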